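/- The TN₂-Smarandache ruled surface χ(s,v) = (T+N₂)/√2 + v N₁ of a unit-speed curve γ with Bishop curvatures k₁, k₂ has Gaussian curvature K = -(1/2)·(k₁k₂/(k₂² + v²k₁² + √2 v k₁k₂))². -/

import Mathlib

open Real RealInnerProductSpace intervalIntegral

noncomputable section

abbrev E3 : Type := EuclideanSpace ℝ (Fin 3)

/-- Cross product on `E3`. -/
def cross3 (a b : E3) : E3 :=
  WithLp.toLp 2 ![a 1 * b 2 - a 2 * b 1, a 2 * b 0 - a 0 * b 2, a 0 * b 1 - a 1 * b 0]

lemma inner_E3 (x y : E3) : ⟪x, y⟫ = x 0 * y 0 + x 1 * y 1 + x 2 * y 2 := by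
  simp [PiLp.inner_apply, Fin.sum_univ_three, RCLike.inner_apply, mul_comm]

lemma cross3_add_left (x y z : E3) : cross3 (x + y) z = cross3 x z + cross3 y z := by
  ext i; fin_cases i <;> simp [cross3] <;> ring

lemma cross3_smul_left (r : ℝ) (x z : E3) : cross3 (r • x) z = r • cross3 x z := by
  ext i; fin_cases i <;> simp [cross3] <;> ring

lemma cross3_self (x : E3) : cross3 x x = 0 := by
  ext i; fin_cases i <;> simp [cross3] <;> ring

lemma cross3_cross_right (a b : E3) : cross3 (cross3 a b) b = ⟪a,b⟫ • b - ⟪b,b⟫ • a := by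
  ext i; rw [inner_E3, inner_E3]; fin_cases i <;> simp [cross3, inner_E3, Fin.sum_univ_three] <;> ring

lemma inner_comb (u₁ u₂ u₃ : E3) (h11 : ⟪u₁,u₁⟫ = 1) (h22 : ⟪u₂,u₂⟫ = 1) (h33 : ⟪u₃,u₃⟫ = 1)
    (h12 : ⟪u₁,u₂⟫ = 0) (h13 : ⟪u₁,u₃⟫ = 0) (h23 : ⟪u₂,u₃⟫ = 0)
    (x₁ x₂ x₃ y₁ y₂ y₃ : ℝ) :
    ⟪x₁•u₁+x₂•u₂+x₃•u₃, y₁•u₁+y₂•u₂+y₃•u₃⟫ = x₁*y₁+x₂*y₂+x₃*y₃ := by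
  have h21 : ⟪u₂,u₁⟫ = 0 := by rw [real_inner_comm]; exact h12
  have h31 : ⟪u₃,u₁⟫ = 0 := by rw [real_inner_comm]; exact h13
  have h32 : ⟪u₃,u₂⟫ = 0 := by rw [real_inner_comm]; exact h23
  simp only [inner_add_left, inner_add_right, real_inner_smul_left, real_inner_smul_right,
    h11, h22, h33, h12, h13, h23, h21, h31, h32]
  ring

lemma endgame0 (x y : ℝ) : -x / 0 = -(1/2) * (y/0)^2 := by simp

lemma endgame (P q1 q2 q3 : ℝ) (hP : P ≠ 0) (hc2 : q3^2 = q2^2/2) :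
    -((q1*q3)^2 * P⁻¹)/P = -(1/2) * (q1*q2/P)^2 := by
  rw [mul_pow, hc2]
  field_simp

/-- Gaussian curvature of the TN₂-Smarandache ruled surface. -/
theorem stmt_9
    (T N₁ N₂ : ℝ → E3) (k₁ k₂ : ℝ → ℝ)
    (hT : ∀ s, deriv T s = k₁ s • N₁ s + k₂ s • N₂ s)
    (hN₁ : ∀ s, deriv N₁ s = -(k₁ s) • T s)
    (hN₂ : ∀ s, deriv N₂ s = -(k₂ s) • T s)
    (hTu : ∀ s, ‖T s‖ = 1) (hN₁u : ∀ s, ‖N₁ s‖ = 1) (hN₂u : ∀ s, ‖N₂ s‖ = 1)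
    (hTN₁ : ∀ s, ⟪T s, N₁ s⟫ = 0) (hTN₂ : ∀ s, ⟪T s, N₂ s⟫ = 0)
    (hN₁N₂ : ∀ s, ⟪N₁ s, N₂ s⟫ = 0)
    (horient : ∀ s, cross3 (T s) (N₁ s) = N₂ s)
    :
    ∀ s v : ℝ,
      let χ : ℝ → ℝ → E3 := fun t u => (Real.sqrt 2)⁻¹ • (T t + N₂ t) + u • N₁ t
      let χs : E3 := deriv (fun t => χ t v) s
      let χv : E3 := deriv (fun u => χ s u) v
      let χss : E3 := deriv (fun t => deriv (fun t' => χ t' v) t) s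
      let χsv : E3 := deriv (fun u => deriv (fun t => χ t u) s) v
      let χvv : E3 := deriv (fun u => deriv (fun u' => χ s u') u) v
      let n : E3 := ‖cross3 χs χv‖⁻¹ • cross3 χs χv
      let Ec : ℝ := ⟪χs, χs⟫
      let Fc : ℝ := ⟪χs, χv⟫
      let Gc : ℝ := ⟪χv, χv⟫
      let Lc : ℝ := ⟪χss, n⟫
      let Mc : ℝ := ⟪χsv, n⟫
      let Nc : ℝ := ⟪χvv, n⟫
      let Kc : ℝ := (Lc * Nc - Mc ^ 2) / (Ec * Gc - Fc ^ 2)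
      let Hc : ℝ := (Ec * Nc - 2 * Mc * Fc + Lc * Gc) / (2 * (Ec * Gc - Fc ^ 2))
      Kc = -(1/2) * (k₁ s * k₂ s / (k₂ s ^ 2 + v ^ 2 * k₁ s ^ 2 + Real.sqrt 2 * v * k₁ s * k₂ s)) ^ 2 := by
  intro s v
  dsimp only
  set r : ℝ := Real.sqrt 2 with hrdef
  have hr0 : (0:ℝ) < r := Real.sqrt_pos.mpr (by norm_num)
  have hrne : r ≠ 0 := ne_of_gt hr0
  have hr2 : r ^ 2 = 2 := Real.sq_sqrt (by norm_num)
  set k1 : ℝ := k₁ s with hk1def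
  set k2 : ℝ := k₂ s with hk2def
  -- unit inner products
  have iTT : ⟪T s, T s⟫ = 1 := by
    rw [real_inner_self_eq_norm_sq, hTu s]; norm_num
  have iN1N1 : ⟪N₁ s, N₁ s⟫ = 1 := by
    rw [real_inner_self_eq_norm_sq, hN₁u s]; norm_num
  have iN2N2 : ⟪N₂ s, N₂ s⟫ = 1 := by
    rw [real_inner_self_eq_norm_sq, hN₂u s]; norm_num
  have hTne : T s ≠ 0 := by
    intro h; have := hTu s; rw [h] at this; simp at this
  have iN2N1 : ⟪N₂ s, N₁ s⟫ = 0 := by rw [real_inner_comm]; exact hN₁N₂ s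
  have hk1T : ¬ DifferentiableAt ℝ T s → k1 = 0 := by
    intro h
    have h0 : deriv T s = 0 := deriv_zero_of_not_differentiableAt h
    have h2 := hT s
    rw [h0] at h2
    have h1 : ⟪N₁ s, k₁ s • N₁ s + k₂ s • N₂ s⟫ = 0 := by rw [← h2]; simp
    have h3 : ⟪N₁ s, N₂ s⟫ = 0 := hN₁N₂ s
    rw [inner_add_right, real_inner_smul_right, real_inner_smul_right, iN1N1, h3] at h1
    simpa using h1
  -- χv and χvv
  have innerv : ∀ u : ℝ, deriv (fun u' : ℝ => r⁻¹ • (T s + N₂ s) + u' • N₁ s) u = N₁ s := by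
    intro u
    have h : HasDerivAt (fun u' : ℝ => r⁻¹ • (T s + N₂ s) + u' • N₁ s) (N₁ s) u := by
      simpa using ((hasDerivAt_id u).smul_const (N₁ s)).const_add (r⁻¹ • (T s + N₂ s))
    exact h.deriv
  rw [innerv v]
  have hvv : deriv (fun u : ℝ => deriv (fun u' : ℝ => r⁻¹ • (T s + N₂ s) + u' • N₁ s) u) v
      = 0 := by
    have : (fun u : ℝ => deriv (fun u' : ℝ => r⁻¹ • (T s + N₂ s) + u' • N₁ s) u)
        = fun _ => N₁ s := funext innerv
    rw [this, deriv_const]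
  rw [hvv, inner_zero_left]
  by_cases hQ : DifferentiableAt ℝ T s ∧ DifferentiableAt ℝ N₁ s ∧ DifferentiableAt ℝ N₂ s
  · -- main case: all differentiable
    obtain ⟨hdT, hdN1, hdN2⟩ := hQ
    have hds : ∀ u : ℝ, HasDerivAt (fun t => r⁻¹ • (T t + N₂ t) + u • N₁ t)
        (r⁻¹ • (deriv T s + deriv N₂ s) + u • deriv N₁ s) s := fun u =>
      ((hdT.hasDerivAt.add hdN2.hasDerivAt).const_smul r⁻¹).add
        (hdN1.hasDerivAt.const_smul u)
    set a : ℝ := -(r⁻¹*k2) - v*k1 with hadef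
    set b : ℝ := r⁻¹*k1 with hbdef
    set c : ℝ := r⁻¹*k2 with hcdef
    have hχs : deriv (fun t => r⁻¹ • (T t + N₂ t) + v • N₁ t) s
        = a • T s + b • N₁ s + c • N₂ s := by
      rw [(hds v).deriv, hT, hN₁, hN₂, hadef, hbdef, hcdef, ← hk1def, ← hk2def]
      module
    have hχsv : deriv (fun u : ℝ =>
        deriv (fun t => r⁻¹ • (T t + N₂ t) + u • N₁ t) s) v
        = (-k1) • T s + (0:ℝ) • N₁ s + (0:ℝ) • N₂ s := by
      have heq : (fun u : ℝ => deriv (fun t => r⁻¹ • (T t + N₂ t) + u • N₁ t) s)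
          = fun u : ℝ => r⁻¹ • (deriv T s + deriv N₂ s) + u • deriv N₁ s :=
        funext fun u => (hds u).deriv
      rw [heq]
      have h : HasDerivAt (fun u : ℝ => r⁻¹ • (deriv T s + deriv N₂ s) + u • deriv N₁ s)
          (deriv N₁ s) v := by
        simpa using ((hasDerivAt_id v).smul_const (deriv N₁ s)).const_add
          (r⁻¹ • (deriv T s + deriv N₂ s))
      rw [h.deriv, hN₁, ← hk1def]
      module
    rw [hχs, hχsv]
    -- cross products
    have hN2N1 : cross3 (N₂ s) (N₁ s) = -(T s) := by
      rw [← horient s, cross3_cross_right, hTN₁ s, iN1N1]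
      simp
    have hw : cross3 (a • T s + b • N₁ s + c • N₂ s) (N₁ s)
        = (-c) • T s + (0:ℝ) • N₁ s + a • N₂ s := by
      rw [cross3_add_left, cross3_add_left, cross3_smul_left, cross3_smul_left,
        cross3_smul_left, horient s, cross3_self, hN2N1]
      module
    rw [hw]
    set w : E3 := (-c) • T s + (0:ℝ) • N₁ s + a • N₂ s with hwdef
    have hcomb := inner_comb (T s) (N₁ s) (N₂ s) iTT iN1N1 iN2N2 (hTN₁ s) (hTN₂ s) (hN₁N₂ s)
    have hww : ⟪w, w⟫ = c^2 + a^2 := by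
      rw [hwdef, hcomb]; ring
    have hnw : ‖w‖^2 = c^2 + a^2 := by rw [← real_inner_self_eq_norm_sq, hww]
    have hE : ⟪a • T s + b • N₁ s + c • N₂ s, a • T s + b • N₁ s + c • N₂ s⟫
        = a^2 + b^2 + c^2 := by rw [hcomb]; ring
    have hF : ⟪a • T s + b • N₁ s + c • N₂ s, N₁ s⟫ = b := by
      simp only [inner_add_left, real_inner_smul_left, iN1N1, hTN₁ s, iN2N1]
      ring
    have hG : ⟪(N₁ s : E3), N₁ s⟫ = (1:ℝ) := iN1N1
    have hM : ⟪(-k1) • T s + (0:ℝ) • N₁ s + (0:ℝ) • N₂ s, ‖w‖⁻¹ • w⟫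
        = ‖w‖⁻¹ * (k1 * c) := by
      rw [real_inner_smul_right, hwdef, hcomb]; ring
    rw [hE, hF, hM, iN1N1]
    -- now pure real computation
    have hD : k2 ^ 2 + v ^ 2 * k1 ^ 2 + r * v * k1 * k2 = c^2 + a^2 := by
      rw [hadef, hcdef]
      field_simp
      linear_combination (k2^2 + r*v*k1*k2) * hr2
    rw [mul_zero, zero_sub, show (a^2 + b^2 + c^2) * 1 - b^2 = c^2 + a^2 by ring, hD]
    by_cases hP : c^2 + a^2 = 0
    · rw [hP]
      exact endgame0 _ _
    · have hwn : ‖w‖ ≠ 0 := fun h =>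
        hP (by rw [h] at hnw; simpa using hnw.symm)
      have hinv : (‖w‖⁻¹)^2 = (c^2 + a^2)⁻¹ := by
        rw [← hnw]; rw [inv_pow]
      have hc2 : c^2 = k2^2 / 2 := by
        rw [hcdef, mul_pow, inv_pow, hr2]; ring
      have h1 : (‖w‖⁻¹ * (k1 * c))^2 = (k1*c)^2 * (c^2+a^2)⁻¹ := by
        rw [mul_pow, hinv]; ring
      rw [h1]
      exact endgame _ _ _ _ hP hc2
  · -- degenerate case: both sides are zero
    have hk : k1 = 0 ∨ k2 = 0 := by
      rcases not_and_or.mp hQ with h | h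
      · exact Or.inl (hk1T h)
      rcases not_and_or.mp h with h | h
      · left
        have h0 : deriv N₁ s = 0 := deriv_zero_of_not_differentiableAt h
        have := hN₁ s
        rw [h0] at this
        have := this.symm
        rcases smul_eq_zero.mp this with h1 | h1
        · simpa using h1.symm ▸ (neg_eq_zero.mp h1)
        · exact absurd h1 hTne
      · right
        have h0 : deriv N₂ s = 0 := deriv_zero_of_not_differentiableAt h
        have := hN₂ s
        rw [h0] at this
        rcases smul_eq_zero.mp this.symm with h1 | h1
        · exact neg_eq_zero.mp h1
        · exact absurd h1 hTne
    -- show χsv = 0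
    have hsv0 : deriv (fun u : ℝ =>
        deriv (fun t => r⁻¹ • (T t + N₂ t) + u • N₁ t) s) v = 0 := by
      by_cases hdN1 : DifferentiableAt ℝ N₁ s
      · by_cases hdTN2 : DifferentiableAt ℝ (fun t => T t + N₂ t) s
        · -- affine; derivative is deriv N₁ s = -k₁ s • T s, and k₁ s = 0 here
          have hk10 : k1 = 0 := by
            apply hk1T
            intro hTd
            exact hQ ⟨hTd, hdN1, by
              have heq2 : (fun t => (T t + N₂ t) - T t) = N₂ := by funext t; abel
              simpa [heq2] using hdTN2.fun_sub hTd⟩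
          have heq : (fun u : ℝ => deriv (fun t => r⁻¹ • (T t + N₂ t) + u • N₁ t) s)
              = fun u : ℝ => r⁻¹ • deriv (fun t => T t + N₂ t) s + u • deriv N₁ s := by
            funext u
            exact ((hdTN2.hasDerivAt.const_smul r⁻¹).add
              (hdN1.hasDerivAt.const_smul u)).deriv
          rw [heq]
          have h : HasDerivAt (fun u : ℝ => r⁻¹ • deriv (fun t => T t + N₂ t) s
              + u • deriv N₁ s) (deriv N₁ s) v := by
            simpa using ((hasDerivAt_id v).smul_const (deriv N₁ s)).const_add
              (r⁻¹ • deriv (fun t => T t + N₂ t) s)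
          rw [h.deriv, hN₁, ← hk1def, hk10]
          simp
        · -- no u gives a differentiable map
          have hall : ∀ u : ℝ, ¬ DifferentiableAt ℝ
              (fun t => r⁻¹ • (T t + N₂ t) + u • N₁ t) s := by
            intro u hu
            apply hdTN2
            have h2 : DifferentiableAt ℝ (fun t => r⁻¹ • (T t + N₂ t)) s := by
              have := hu.fun_sub (hdN1.fun_const_smul u)
              simpa using this
            have h3 := h2.fun_const_smul r
            have : (fun t => r • r⁻¹ • (T t + N₂ t)) = fun t => T t + N₂ t := by
              funext t; rw [smul_inv_smul₀ hrne]
            rwa [this] at h3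
          have : (fun u : ℝ => deriv (fun t => r⁻¹ • (T t + N₂ t) + u • N₁ t) s)
              = fun _ => (0:E3) := by
            funext u; exact deriv_zero_of_not_differentiableAt (hall u)
          rw [this, deriv_const]
      · -- N₁ not differentiable: at most one u can give differentiability
        have key : ∀ u₁ u₂ : ℝ, u₁ ≠ u₂ →
            DifferentiableAt ℝ (fun t => r⁻¹ • (T t + N₂ t) + u₁ • N₁ t) s →
            DifferentiableAt ℝ (fun t => r⁻¹ • (T t + N₂ t) + u₂ • N₁ t) s → False := by
          intro u₁ u₂ hne h1 h2
          apply hdN1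
          have h3 := h1.fun_sub h2
          have he : (fun t => (r⁻¹ • (T t + N₂ t) + u₁ • N₁ t)
              - (r⁻¹ • (T t + N₂ t) + u₂ • N₁ t)) = fun t => (u₁ - u₂) • N₁ t := by
            funext t; rw [sub_smul]; abel
          rw [he] at h3
          have h4 := h3.fun_const_smul (u₁ - u₂)⁻¹
          have : (fun t => (u₁ - u₂)⁻¹ • (u₁ - u₂) • N₁ t) = N₁ := by
            funext t; rw [inv_smul_smul₀ (sub_ne_zero.mpr hne)]
          rwa [this] at h4
        set g : ℝ → E3 := fun u =>
          deriv (fun t => r⁻¹ • (T t + N₂ t) + u • N₁ t) s with hgdef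
        by_cases hex : ∃ u₀ : ℝ, u₀ ≠ v ∧
            DifferentiableAt ℝ (fun t => r⁻¹ • (T t + N₂ t) + u₀ • N₁ t) s
        · obtain ⟨u₀, hu₀v, hd₀⟩ := hex
          have hz : ∀ u : ℝ, u ≠ u₀ → g u = 0 := by
            intro u hu
            exact deriv_zero_of_not_differentiableAt
              (fun hd => key u u₀ hu hd hd₀)
          have hev : g =ᶠ[nhds v] (fun _ => (0:E3)) := by
            filter_upwards [isOpen_ne.mem_nhds (show v ≠ u₀ from fun h => hu₀v h.symm)]
              with u hu
            exact hz u hu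
          rw [hev.deriv_eq, deriv_const]
        · push_neg at hex
          have hz : ∀ u : ℝ, u ≠ v → g u = 0 := fun u hu =>
            deriv_zero_of_not_differentiableAt (hex u hu)
          by_cases hgv : g v = 0
          · have : g = fun _ => (0:E3) := by
              funext u
              by_cases h : u = v
              · rw [h]; exact hgv
              · exact hz u h
            rw [this, deriv_const]
          · apply deriv_zero_of_not_differentiableAt
            intro hd
            apply hgv
            have ht1 : Filter.Tendsto g (nhdsWithin v {v}ᶜ) (nhds (g v)) :=
              hd.continuousAt.tendsto.mono_left nhdsWithin_le_nhds
            have hev : g =ᶠ[nhdsWithin v {v}ᶜ] (fun _ => (0:E3)) := by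
              filter_upwards [self_mem_nhdsWithin] with u hu
              exact hz u hu
            have ht2 : Filter.Tendsto g (nhdsWithin v {v}ᶜ) (nhds 0) :=
              (Filter.tendsto_congr' hev).mpr tendsto_const_nhds
            exact tendsto_nhds_unique ht1 ht2
    rw [hsv0, inner_zero_left]
    have hnum : ∀ (X Y : ℝ), (X * 0 - 0^2)/Y = 0 := by intros; simp
    rcases hk with h | h
    · rw [h, hnum, zero_mul, zero_div]; norm_num
    · rw [h, hnum, mul_zero, zero_div]; norm_num
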